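/- Let E ⊆ E₀ be fields of characteristic 0 with E₀/E a finite extension, G a group, and V₀ a finite-dimensional irreducible representation of G over E₀. Then the restriction of scalars res_{E₀/E} V₀ is a semisimple representation of G over E, and it is isotypic: for every irreducible E-subrepresentation V of res_{E₀/E} V₀ there is an integer m ≥ 1 such that res_{E₀/E} V₀ is isomorphic to the direct sum V^{⊕m} of m copies of V as representations of G over E. -/

import Mathlib

/-- Restriction of scalars of a representation along a field extension `E ⊆ E₀`. -/
noncomputable def resRep (E : Type*) {E₀ G V : Type*} [Field E] [Field E₀] [Algebra E E₀]
    [Monoid G] [AddCommGroup V] [Module E₀ V] [Module E V] [IsScalarTower E E₀ V]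
    (ρ : Representation E₀ G V) : Representation E G V where
  toFun g := (ρ g).restrictScalars E
  map_one' := by ext v; simp
  map_mul' g h := by ext v; simp

section Aux

open MonoidAlgebra Representation

variable {E G V : Type*} [Field E] [Group G] [AddCommGroup V] [Module E V]
variable (ρ : Representation E G V)

theorem aux_smul_def (a : MonoidAlgebra E G) (v : ρ.asModule) :
    a • v = ρ.asAlgebraHom a v := rfl

instance auxTower : IsScalarTower E (MonoidAlgebra E G) ρ.asModule :=
  ⟨fun r a v => by
    show ρ.asAlgebraHom (r • a) v = r • ρ.asAlgebraHom a v
    rw [map_smul]; rfl⟩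

theorem aux_alg_smul (r : E) (v : ρ.asModule) :
    algebraMap E (MonoidAlgebra E G) r • v = r • v := by
  show ρ.asAlgebraHom (algebraMap E (MonoidAlgebra E G) r) v = r • v
  rw [AlgHom.commutes]
  exact Module.algebraMap_end_apply E E V r v

theorem aux_single_smul (g : G) (v : ρ.asModule) :
    (MonoidAlgebra.of E G g : MonoidAlgebra E G) • v = ρ g v := by
  show ρ.asAlgebraHom (MonoidAlgebra.of E G g) v = _
  rw [asAlgebraHom_of]

/-- An invariant `E`-subspace as a `MonoidAlgebra E G`-submodule. -/
def invtToSub (W : Submodule E V) (hW : ∀ g : G, ∀ v ∈ W, ρ g v ∈ W) :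
    Submodule (MonoidAlgebra E G) ρ.asModule where
  carrier := {v : ρ.asModule | v ∈ W}
  add_mem' := fun ha hb => W.add_mem ha hb
  zero_mem' := W.zero_mem
  smul_mem' := by
    intro a v hv
    show ρ.asAlgebraHom a v ∈ W
    induction a using MonoidAlgebra.induction_on with
    | of g => rw [asAlgebraHom_of]; exact hW g v hv
    | add a b ha hb => rw [map_add]; exact W.add_mem ha hb
    | smul r a ha => rw [map_smul]; exact W.smul_mem r ha

theorem mem_invtToSub (W : Submodule E V) (hW : ∀ g : G, ∀ v ∈ W, ρ g v ∈ W)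
    {v : ρ.asModule} : v ∈ invtToSub ρ W hW ↔ v ∈ W := Iff.rfl

/-- A `MonoidAlgebra E G`-submodule as an `E`-subspace. -/
def subToInvt (p : Submodule (MonoidAlgebra E G) ρ.asModule) : Submodule E V where
  carrier := {v : V | v ∈ p}
  add_mem' := fun ha hb => p.add_mem ha hb
  zero_mem' := p.zero_mem
  smul_mem' := fun r x hx => by
    have := p.smul_mem (algebraMap E (MonoidAlgebra E G) r) hx
    erw [aux_alg_smul] at this; exact this

theorem mem_subToInvt {p : Submodule (MonoidAlgebra E G) ρ.asModule} {v : V} :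
    v ∈ subToInvt ρ p ↔ v ∈ p := Iff.rfl

theorem subToInvt_invt (p : Submodule (MonoidAlgebra E G) ρ.asModule) :
    ∀ g : G, ∀ v ∈ subToInvt ρ p, ρ g v ∈ subToInvt ρ p := fun g v hv => by
  have := p.smul_mem (MonoidAlgebra.of E G g) hv
  erw [aux_single_smul] at this; exact this

theorem isCompl_subToInvt {W : Submodule E V} (hW : ∀ g : G, ∀ v ∈ W, ρ g v ∈ W)
    {p : Submodule (MonoidAlgebra E G) ρ.asModule}
    (h : IsCompl (invtToSub ρ W hW) p) : IsCompl W (subToInvt ρ p) := by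
  constructor
  · rw [Submodule.disjoint_def]
    intro x hx1 hx2
    exact Submodule.disjoint_def.mp h.disjoint x ((mem_invtToSub ρ W hW).mpr hx1)
      ((mem_subToInvt ρ).mp hx2)
  · rw [codisjoint_iff, eq_top_iff]
    intro x _
    obtain ⟨y, z, hy, hz, hyz⟩ := Submodule.codisjoint_iff_exists_add_eq.mp h.codisjoint x
    exact Submodule.mem_sup.mpr
      ⟨y, (mem_invtToSub ρ W hW).mp hy, z, (mem_subToInvt ρ).mpr hz, hyz⟩

end Aux

section Aux2

open MonoidAlgebra Representation

variable {E E₀ G V₀ : Type*} [Field E] [Field E₀]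
    [Algebra E E₀] [Group G]
    [AddCommGroup V₀] [Module E₀ V₀] [Module E V₀] [IsScalarTower E E₀ V₀]
variable (ρ₀ : Representation E₀ G V₀)

theorem resRep_apply (g : G) (v : V₀) : resRep E ρ₀ g v = ρ₀ g v := rfl

noncomputable instance auxModE₀ : Module E₀ (resRep E ρ₀).asModule :=
  inferInstanceAs (Module E₀ V₀)

instance auxTower₀ : IsScalarTower E E₀ (resRep E ρ₀).asModule :=
  inferInstanceAs (IsScalarTower E E₀ V₀)

/-- Multiplication by a nonzero element of `E₀` as a `MonoidAlgebra E G`-linear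
automorphism of the restricted representation. -/
noncomputable def mulUnit (c : E₀ˣ) :
    (resRep E ρ₀).asModule ≃ₗ[MonoidAlgebra E G] (resRep E ρ₀).asModule where
  toFun v := (c : E₀) • v
  invFun v := ((c⁻¹ : E₀ˣ) : E₀) • v
  left_inv v := by
    show ((c⁻¹ : E₀ˣ) : E₀) • ((c : E₀) • v) = v
    rw [smul_smul, Units.inv_mul, one_smul]
  right_inv v := by
    show (c : E₀) • (((c⁻¹ : E₀ˣ) : E₀) • v) = v
    rw [smul_smul, Units.mul_inv, one_smul]
  map_add' u v := smul_add _ _ _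
  map_smul' a v := by
    simp only [RingHom.id_apply]
    show (c : E₀) • (a • v) = a • ((c : E₀) • v)
    induction a using MonoidAlgebra.induction_on with
    | of g =>
        rw [aux_single_smul, aux_single_smul]
        exact ((ρ₀ g).map_smul (c : E₀) v).symm
    | add a b ha hb =>
        rw [add_smul, add_smul, smul_add, ha, hb]
    | smul r a ha =>
        calc (c : E₀) • ((r • a) • v) = (c : E₀) • (r • (a • v)) := by rw [smul_assoc]
          _ = r • ((c : E₀) • (a • v)) := (smul_comm r (c : E₀) (a • v)).symm
          _ = r • (a • ((c : E₀) • v)) := by rw [ha]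
          _ = (r • a) • ((c : E₀) • v) := by rw [smul_assoc]

theorem mulUnit_apply (c : E₀ˣ) (v : (resRep E ρ₀).asModule) :
    mulUnit ρ₀ c v = (c : E₀) • v := rfl

end Aux2

open MonoidAlgebra Representation in
/-- for a finite extension `E₀/E` of fields of characteristic 0 and a
finite-dimensional irreducible representation `V₀` of `G` over `E₀`, the restriction of
scalars `res_{E₀/E} V₀` is semisimple over `E` (every invariant subspace has an
invariant complement) and isotypic: every irreducible invariant `E`-subspace `W`
satisfies `res_{E₀/E} V₀ ≅ W^{⊕m}` for some `m ≥ 1`, equivariantly. -/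
theorem stmt_3 {E E₀ G V₀ : Type*} [Field E] [CharZero E] [Field E₀] [CharZero E₀]
    [Algebra E E₀] [FiniteDimensional E E₀] [Group G]
    [AddCommGroup V₀] [Module E₀ V₀] [Module E V₀] [IsScalarTower E E₀ V₀]
    [FiniteDimensional E₀ V₀]
    (ρ₀ : Representation E₀ G V₀)
    (hnontriv : Nontrivial V₀)
    (hirr : ∀ W : Submodule E₀ V₀, (∀ g : G, ∀ v ∈ W, ρ₀ g v ∈ W) → W = ⊥ ∨ W = ⊤) :
    (∀ W : Submodule E V₀, (∀ g : G, ∀ v ∈ W, resRep E ρ₀ g v ∈ W) →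
      ∃ W' : Submodule E V₀, (∀ g : G, ∀ v ∈ W', resRep E ρ₀ g v ∈ W') ∧ IsCompl W W') ∧
    (∀ W : Submodule E V₀, (∀ g : G, ∀ v ∈ W, resRep E ρ₀ g v ∈ W) →
      W ≠ ⊥ →
      (∀ U : Submodule E V₀, U ≤ W → (∀ g : G, ∀ v ∈ U, resRep E ρ₀ g v ∈ U) →
        U = ⊥ ∨ U = W) →
      ∃ m : ℕ, 1 ≤ m ∧ ∃ f : V₀ ≃ₗ[E] (Fin m → W),
        ∀ (g : G) (v : V₀) (i : Fin m),
          (f (resRep E ρ₀ g v) i : V₀) = resRep E ρ₀ g ((f v i : V₀))) := by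
  classical
  set A := MonoidAlgebra E G with hA
  haveI : FiniteDimensional E V₀ := Module.Finite.trans E₀ V₀
  haveI hartE : IsArtinian E (resRep E ρ₀).asModule := inferInstanceAs (IsArtinian E V₀)
  haveI hart : IsArtinian A (resRep E ρ₀).asModule := isArtinian_of_tower E hartE
  haveI hnt : Nontrivial (resRep E ρ₀).asModule := hnontriv
  -- the key lemma: given any simple `A`-submodule `Wa`, the module is a sum of simples
  -- and every simple `A`-submodule is isomorphic to `Wa`.
  have key : ∀ Wa : Submodule A (resRep E ρ₀).asModule, IsSimpleModule A Wa →
      (sSup {m : Submodule A (resRep E ρ₀).asModule | IsSimpleModule A m} = ⊤) ∧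
      (∀ U : Submodule A (resRep E ρ₀).asModule, IsSimpleModule A U →
        Nonempty (U ≃ₗ[A] Wa)) := by
    intro Wa hWa
    haveI := hWa
    set n := Module.finrank E E₀ with hn
    set B : Module.Basis (Fin n) E E₀ := Module.finBasis E E₀ with hB
    set u : Fin n → E₀ˣ := fun i => Units.mk0 (B i) (B.ne_zero i) with hu
    set N : Fin n → Submodule A (resRep E ρ₀).asModule :=
      fun i => Wa.map ((mulUnit ρ₀ (u i)).toLinearMap) with hN
    have hNsimple : ∀ i, IsSimpleModule A (N i) :=
      fun i => IsSimpleModule.congr ((mulUnit ρ₀ (u i)).submoduleMap Wa).symm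
    set S : Submodule A (resRep E ρ₀).asModule := ⨆ i, N i with hS
    -- `S` contains all `E₀`-multiples of elements of `Wa`
    have hcs : ∀ (c : E₀) (w : (resRep E ρ₀).asModule), w ∈ Wa → c • w ∈ S := by
      intro c w hw
      rw [← B.sum_repr c, Finset.sum_smul]
      refine Submodule.sum_mem S fun j _ => ?_
      rw [smul_assoc]
      have h1 : (B j : E₀) • w ∈ N j := ⟨w, hw, rfl⟩
      have h2 : (B j : E₀) • w ∈ S := (le_iSup N j) h1
      have h3 := S.smul_mem (algebraMap E A (B.repr c j)) h2
      rwa [aux_alg_smul (resRep E ρ₀)] at h3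
    -- `S` is an `E₀`-submodule
    have hsmulE₀ : ∀ v ∈ S, ∀ c : E₀, c • v ∈ S := by
      intro v hv
      refine Submodule.iSup_induction N (motive := fun x => ∀ c : E₀, c • x ∈ S) hv ?_ ?_ ?_
      · intro i x hx c
        obtain ⟨w, hw, rfl⟩ := hx
        have : c • ((mulUnit ρ₀ (u i)).toLinearMap w) = (c * (u i : E₀)) • w := by
          show c • ((u i : E₀) • w) = _
          rw [smul_smul]
        rw [this]
        exact hcs _ w hw
      · intro c; rw [smul_zero]; exact S.zero_mem
      · intro x y hx hy c
        rw [smul_add]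
        exact S.add_mem (hx c) (hy c)
    set T : Submodule E₀ V₀ :=
      { carrier := {v : V₀ | v ∈ S}
        add_mem' := fun ha hb => S.add_mem ha hb
        zero_mem' := S.zero_mem
        smul_mem' := fun c x hx => hsmulE₀ x hx c } with hT
    have hTinvt : ∀ g : G, ∀ v ∈ T, ρ₀ g v ∈ T := by
      intro g v hv
      have := S.smul_mem (MonoidAlgebra.of E G g) hv
      erw [aux_single_smul (resRep E ρ₀)] at this; exact this
    have hTne : T ≠ ⊥ := by
      haveI := IsSimpleModule.nontrivial A Wa
      obtain ⟨w, hw0⟩ := exists_ne (0 : Wa)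
      intro hbot
      have hmem : (w : (resRep E ρ₀).asModule) ∈ T := by
        have := hcs 1 w w.2
        rwa [one_smul] at this
      rw [hbot] at hmem
      exact hw0 (Subtype.ext ((Submodule.mem_bot (M := V₀) E₀).mp hmem))
    have hTtop : T = ⊤ := (hirr T hTinvt).resolve_left hTne
    have hsup : S = ⊤ := by
      rw [eq_top_iff]
      intro x _
      have : x ∈ T := by rw [hTtop]; trivial
      exact this
    have hs : sSup {m : Submodule A (resRep E ρ₀).asModule | IsSimpleModule A m} = ⊤ := by
      rw [eq_top_iff, ← hsup]
      exact iSup_le fun i => le_sSup (hNsimple i)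
    refine ⟨hs, ?_⟩
    haveI hss : IsSemisimpleModule A (resRep E ρ₀).asModule :=
      IsSemisimpleModule.of_sSup_simples_eq_top hs
    intro U hU
    haveI := hU
    obtain ⟨C, hC⟩ := exists_isCompl U
    set π := U.linearProjOfIsCompl C hC with hπ
    have hex : ∃ i, (π ∘ₗ (N i).subtype) ≠ 0 := by
      by_contra h
      push_neg at h
      have hker : (⊤ : Submodule A (resRep E ρ₀).asModule) ≤ LinearMap.ker π := by
        rw [← hsup]
        refine iSup_le fun i x hx => ?_
        have := congrFun (congrArg DFunLike.coe (h i)) ⟨x, hx⟩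
        simpa using this
      haveI := IsSimpleModule.nontrivial A U
      obtain ⟨w, hw0⟩ := exists_ne (0 : U)
      have h1 : π (w : (resRep E ρ₀).asModule) = w := U.linearProjOfIsCompl_apply_left hC w
      have h2 : π (w : (resRep E ρ₀).asModule) = 0 := hker trivial
      exact hw0 (by rw [← h1, h2])
    obtain ⟨i, hi⟩ := hex
    haveI := hNsimple i
    set φ := π ∘ₗ (N i).subtype with hφ
    have hker : LinearMap.ker φ = ⊥ :=
      (eq_bot_or_eq_top _).resolve_right fun h => hi (LinearMap.ker_eq_top.mp h)
    have hrange : LinearMap.range φ = ⊤ :=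
      (eq_bot_or_eq_top _).resolve_left fun h => hi (LinearMap.range_eq_bot.mp h)
    have hbij : Function.Bijective φ :=
      ⟨LinearMap.ker_eq_bot.mp hker, LinearMap.range_eq_top.mp hrange⟩
    exact ⟨(LinearEquiv.ofBijective φ hbij).symm.trans
      ((mulUnit ρ₀ (u i)).submoduleMap Wa).symm⟩
  -- existence of a simple `A`-submodule
  haveI hatomic : IsAtomic (Submodule A (resRep E ρ₀).asModule) :=
    isAtomic_of_orderBot_wellFounded_lt hart.wf
  obtain ⟨Wa₁, hWa₁atom, -⟩ :=
    (hatomic.eq_bot_or_exists_atom_le (⊤ : Submodule A (resRep E ρ₀).asModule)).resolve_left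
      top_ne_bot
  haveI hWa₁ : IsSimpleModule A Wa₁ := isSimpleModule_iff_isAtom.mpr hWa₁atom
  have hsimples := (key Wa₁ hWa₁).1
  haveI hss : IsSemisimpleModule A (resRep E ρ₀).asModule :=
    IsSemisimpleModule.of_sSup_simples_eq_top hsimples
  constructor
  · -- semisimplicity
    intro W hW
    obtain ⟨Wa', hcompl⟩ := exists_isCompl (invtToSub (resRep E ρ₀) W hW)
    exact ⟨subToInvt (resRep E ρ₀) Wa', subToInvt_invt (resRep E ρ₀) Wa',
      isCompl_subToInvt (resRep E ρ₀) hW hcompl⟩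
  · -- isotypicity
    intro W hW hWne hWmin
    set Wa := invtToSub (resRep E ρ₀) W hW with hWadef
    haveI hWsimple : IsSimpleModule A Wa := by
      rw [isSimpleModule_iff_isAtom]
      constructor
      · intro hbot
        apply hWne
        rw [eq_bot_iff]
        intro x hx
        have hx' := (mem_invtToSub (resRep E ρ₀) W hW).mpr hx
        rw [← hWadef, hbot] at hx'
        rw [Submodule.mem_bot]
        exact (Submodule.mem_bot (M := (resRep E ρ₀).asModule) A).mp hx'
      · intro b hb
        have hbW : subToInvt (resRep E ρ₀) b ≤ W := fun x hx =>
          (mem_invtToSub (resRep E ρ₀) W hW).mp (hb.le ((mem_subToInvt (resRep E ρ₀)).mp hx))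
        rcases hWmin (subToInvt (resRep E ρ₀) b) hbW (subToInvt_invt (resRep E ρ₀) b) with h | h
        · rw [eq_bot_iff]
          intro x hx
          have hx' := (mem_subToInvt (resRep E ρ₀)).mpr hx
          rw [h] at hx'
          rw [Submodule.mem_bot]
          exact (Submodule.mem_bot (M := V₀) E).mp hx'
        · exfalso
          refine hb.ne (le_antisymm hb.le fun x hx => ?_)
          have hxW := (mem_invtToSub (resRep E ρ₀) W hW).mp hx
          rw [← h] at hxW
          exact (mem_subToInvt (resRep E ρ₀)).mp hxW
    obtain ⟨hs, schur⟩ := key Wa hWsimple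
    obtain ⟨s, hind, hstop, hsimple⟩ :=
      IsSemisimpleModule.exists_sSupIndep_sSup_simples_eq_top A (resRep E ρ₀).asModule
    have hsfin : s.Finite := WellFoundedLT.finite_of_sSupIndep hind
    haveI := hsfin.fintype
    have hsne : s.Nonempty := by
      rcases Set.eq_empty_or_nonempty s with h | h
      · exfalso
        rw [h, sSup_empty] at hstop
        exact absurd hstop bot_ne_top
      · exact h
    haveI : Nonempty s := hsne.to_subtype
    have hm1 : 1 ≤ Fintype.card s := Fintype.card_pos
    set m := Fintype.card s with hm
    let c : s → Submodule A (resRep E ρ₀).asModule := fun i => i.1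
    have hinternal : DirectSum.IsInternal c := by
      rw [DirectSum.isInternal_submodule_iff_iSupIndep_and_iSup_eq_top]
      have h2 : ⨆ (i : s), (i : Submodule A (resRep E ρ₀).asModule) = ⊤ := by
        rw [← sSup_eq_iSup']; exact hstop
      exact ⟨(sSupIndep_iff s).mp hind, h2⟩
    let fA : (resRep E ρ₀).asModule ≃ₗ[A] (Fin m → ↥Wa) :=
      ((LinearEquiv.ofBijective (DirectSum.coeLinearMap c) hinternal).symm ≪≫ₗ
        DirectSum.linearEquivFunOnFintype A s (fun i => ↥(c i))) ≪≫ₗ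
      (LinearEquiv.piCongrRight (fun i => Classical.choice (schur (c i) (hsimple (c i) i.2)))) ≪≫ₗ
      (LinearEquiv.funCongrLeft A ↥Wa (Fintype.equivFin s).symm)
    have hsmulE : ∀ (r : E) (x : (resRep E ρ₀).asModule) (i : Fin m),
        (fA (r • x) i : (resRep E ρ₀).asModule) = r • (fA x i : (resRep E ρ₀).asModule) := by
      intro r x i
      rw [← aux_alg_smul (resRep E ρ₀) r x, fA.map_smul, Pi.smul_apply, Submodule.coe_smul,
        aux_alg_smul (resRep E ρ₀)]
    have hact : ∀ (g : G) (v : (resRep E ρ₀).asModule) (i : Fin m),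
        (fA ((resRep E ρ₀) g v) i : (resRep E ρ₀).asModule)
          = (resRep E ρ₀) g (fA v i : (resRep E ρ₀).asModule) := by
      intro g v i
      rw [← aux_single_smul (resRep E ρ₀) g v, fA.map_smul, Pi.smul_apply, Submodule.coe_smul,
        aux_single_smul (resRep E ρ₀)]
    refine ⟨m, hm1, ?_⟩
    refine ⟨{ toFun := fun v i => ⟨(fA v i : (resRep E ρ₀).asModule),
                (mem_invtToSub (resRep E ρ₀) W hW).mp (fA v i).2⟩
              invFun := fun w => fA.symm
                (fun i => ⟨(w i : V₀), (mem_invtToSub (resRep E ρ₀) W hW).mpr (w i).2⟩)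
              map_add' := ?_
              map_smul' := ?_
              left_inv := ?_
              right_inv := ?_ }, ?_⟩
    · intro x y
      funext i
      apply Subtype.ext
      show ((fA (x + y) i : (resRep E ρ₀).asModule)) =
        (fA x i : (resRep E ρ₀).asModule) + (fA y i : (resRep E ρ₀).asModule)
      erw [map_add]
      rfl
    · intro r x
      funext i
      apply Subtype.ext
      show ((fA (r • x) i : (resRep E ρ₀).asModule)) = r • (fA x i : (resRep E ρ₀).asModule)
      exact hsmulE r x i
    · intro v
      have hfix : (fun i => (⟨(fA v i : (resRep E ρ₀).asModule),
          (mem_invtToSub (resRep E ρ₀) W hW).mpr ((mem_invtToSub (resRep E ρ₀) W hW).mp (fA v i).2)⟩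
            : ↥Wa)) = fA v := by
        funext i; apply Subtype.ext; rfl
      show fA.symm _ = v
      rw [hfix]; exact fA.symm_apply_apply v
    · intro w
      funext i
      apply Subtype.ext
      show ((fA (fA.symm _) i : (resRep E ρ₀).asModule)) = ((w i : V₀))
      rw [LinearEquiv.apply_symm_apply]
    · intro g v i
      show ((fA (resRep E ρ₀ g v) i : (resRep E ρ₀).asModule))
        = resRep E ρ₀ g ((fA v i : (resRep E ρ₀).asModule))
      exact hact g v i
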